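/- On the free K-vector space H on forests of planar rooted trees with operations * and ≻, there exists a unique K-linear map Δ : H → H ⊗ H such that Δ(|) = 0 and, writing Δ(x) = x₍₁₎ ⊗ x₍₂₎ in Sweedler notation, Δ(x ≻ y) = x₍₁₎ ⊗ (x₍₂₎ ≻ y) + (x ≻ y₍₁₎) ⊗ y₍₂₎ + x ⊗ y and Δ(x * y) = x₍₁₎ ⊗ (x₍₂₎ * y) + (x * y₍₁₎) ⊗ y₍₂₎ + x ⊗ y hold for all x, y ∈ H. -/

import Mathlib

open scoped TensorProduct

/-- Planar rooted trees: a tree is either the leaf `|`, or a grafting of at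
least two planar rooted trees (`graft t₁ t₂ rest` represents `[t₁, t₂, rest…]`). -/
inductive PTree : Type
  | leaf : PTree
  | graft (t₁ t₂ : PTree) (rest : List PTree) : PTree

/-- A forest is a nonempty word of planar rooted trees. -/
abbrev Forest : Type := {l : List PTree // l ≠ []}

/-- Grafting of a list of trees (only meaningful on lists of length ≥ 2;
on shorter lists we return a junk value, which is never used). -/
def graftList : List PTree → PTree
  | [] => .leaf
  | [a] => a
  | a :: b :: rest => .graft a b rest

mutual
/-- Number of leaves of a planar rooted tree. -/
def leavesT : PTree → ℕ
  | .leaf => 1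
  | .graft a b rest => leavesT a + leavesT b + leavesL rest

/-- Sum of the numbers of leaves of a list of trees. -/
def leavesL : List PTree → ℕ
  | [] => 0
  | t :: ts => leavesT t + leavesL ts
end

/-- Number of leaves of a forest. -/
def leavesF (w : Forest) : ℕ := leavesL w.1

variable (K : Type*) [Field K]

/-- `H K` is the free `K`-vector space with basis the set of forests of
planar rooted trees. -/
abbrev H : Type _ := Forest →₀ K

/-- The leaf, as a (one-tree) forest. -/
def leafF : Forest := ⟨[PTree.leaf], by simp⟩

/-- The concatenation product `*`, as a bilinear map on `H K`;
on basis forests it is concatenation of words. -/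
noncomputable def mulH : H K →ₗ[K] H K →ₗ[K] H K :=
  Finsupp.lift (H K →ₗ[K] H K) K Forest fun x =>
    Finsupp.lift (H K) K Forest fun y =>
      Finsupp.single ⟨x.1 ++ y.1, by simp [x.2]⟩ 1

/-- The grafting operation `≻` on two basis forests:
`(t₁…tₚ) ≻ (s₁…s_q) = Σ_{k=1}^{q} Σ_{i=0}^{p−1}
t₁…t_{p−(i+1)} [t_{p−i},…,tₚ, s₁,…,s_k] s_{k+1}…s_q`. -/
noncomputable def succForest (x y : Forest) : H K :=
  ∑ k ∈ Finset.range y.1.length, ∑ i ∈ Finset.range x.1.length,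
    Finsupp.single
      ⟨x.1.take (x.1.length - (i + 1)) ++
        (graftList (x.1.drop (x.1.length - (i + 1)) ++ y.1.take (k + 1)) :: y.1.drop (k + 1)),
        by simp⟩ 1

/-- The operation `≻`, as a bilinear map on `H K`. -/
noncomputable def succH : H K →ₗ[K] H K →ₗ[K] H K :=
  Finsupp.lift (H K →ₗ[K] H K) K Forest fun x =>
    Finsupp.lift (H K) K Forest fun y => succForest K x y

/-- A shortcut instance (definitionally the standard one) to help elaboration. -/
noncomputable instance : Zero (H K ⊗[K] H K) :=
  (inferInstance : AddCommMonoid (H K ⊗[K] H K)).toZero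

namespace Stmt4

variable {K : Type*} [Field K]

/-- Concatenation of forests. -/
def fcat (x y : Forest) : Forest := ⟨x.1 ++ y.1, by simp [x.2]⟩

lemma lift_single {M : Type*} [AddCommMonoid M] [Module K M] (f : Forest → M) (w : Forest) :
    Finsupp.lift M K Forest f (Finsupp.single w (1 : K)) = f w := by
  rw [Finsupp.lift_apply, Finsupp.sum_single_index (by simp), one_smul]

lemma mulH_single (x y : Forest) :
    mulH K (Finsupp.single x 1) (Finsupp.single y 1) = Finsupp.single (fcat x y) (1:K) := by
  rw [mulH, lift_single, lift_single]; rfl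

lemma succH_single (x y : Forest) :
    succH K (Finsupp.single x 1) (Finsupp.single y 1) = succForest K x y := by
  rw [succH, lift_single, lift_single]

/-- leaves are positive -/
lemma leavesT_pos (t : PTree) : 0 < leavesT t := by
  cases t with
  | leaf => simp [leavesT]
  | graft a b cs => have := leavesT_pos a; rw [leavesT]; omega

lemma leavesL_append (l1 l2 : List PTree) : leavesL (l1 ++ l2) = leavesL l1 + leavesL l2 := by
  induction l1 with
  | nil => simp [leavesL]
  | cons t ts ih => simp [leavesL, ih]; omega

lemma leavesL_pos {l : List PTree} (h : l ≠ []) : 0 < leavesL l := by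
  cases l with
  | nil => simp at h
  | cons t ts => have := leavesT_pos t; rw [leavesL]; omega

lemma leavesT_graftList {l : List PTree} (h : 2 ≤ l.length) : leavesT (graftList l) = leavesL l := by
  match l, h with
  | a :: b :: rest, _ => simp [graftList, leavesT, leavesL, leavesL_append]; omega

lemma leavesL_dropLast_getLast {l : List PTree} (h : l ≠ []) :
    leavesL l.dropLast + leavesT (l.getLast h) = leavesL l := by
  conv_rhs => rw [← List.dropLast_append_getLast h]
  rw [leavesL_append]; simp [leavesL]

/-- tag for the termination measure -/
def tgT : PTree → ℕ
  | .leaf => 0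
  | .graft _ _ _ => 1

def tg : List PTree → ℕ
  | [t] => tgT t
  | _ => 0

lemma tg_le (l : List PTree) : tg l ≤ 1 := by
  match l with
  | [] => simp [tg]
  | [t] => cases t <;> simp [tg, tgT]
  | a :: b :: r => simp [tg]

/-- the measure -/
def mu (l : List PTree) : ℕ := 2 * leavesL l + tg l

/-- the general term of `succForest`. -/
def strm (x y : List PTree) (k i : ℕ) : List PTree :=
  x.take (x.length - (i+1)) ++
    graftList (x.drop (x.length - (i+1)) ++ y.take (k+1)) :: y.drop (k+1)

lemma strm_ne_nil (x y : List PTree) (k i : ℕ) : strm x y k i ≠ [] := by simp [strm]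

lemma succForest_eq (x y : Forest) :
    succForest K x y = ∑ k ∈ Finset.range y.1.length, ∑ i ∈ Finset.range x.1.length,
      Finsupp.single ⟨strm x.1 y.1 k i, strm_ne_nil _ _ _ _⟩ (1:K) := rfl

end Stmt4
namespace Stmt4

variable {K : Type*} [Field K]

/-- all-but-last of `a :: l`, without proofs. -/
def initL (a : PTree) : List PTree → List PTree
  | [] => []
  | b :: r => a :: initL b r

/-- last element of `a :: l`, without proofs. -/
def lastT (a : PTree) : List PTree → PTree
  | [] => a
  | b :: r => lastT b r

lemma initL_append_lastT (a : PTree) (l : List PTree) :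
    initL a l ++ [lastT a l] = a :: l := by
  induction l generalizing a with
  | nil => rfl
  | cons b r ih => simp [initL, lastT, ih]

lemma length_initL (a : PTree) (l : List PTree) : (initL a l).length = l.length := by
  induction l generalizing a with
  | nil => rfl
  | cons b r ih => simp [initL, ih]

lemma leavesL_initL_lastT (a : PTree) (l : List PTree) :
    leavesL (initL a l) + leavesT (lastT a l) = leavesL (a :: l) := by
  conv_rhs => rw [← initL_append_lastT a l]
  rw [leavesL_append]
  simp [leavesL]

lemma leavesL_strm {x : List PTree} {s : PTree} {i : ℕ} (hi : i + 1 ≤ x.length) :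
    leavesL (strm x [s] 0 i) = leavesL x + leavesT s := by
  rw [strm]
  have h2 : 2 ≤ (x.drop (x.length - (i+1)) ++ List.take 1 [s]).length := by
    simp [List.length_drop]; omega
  rw [leavesL_append]
  show _ + leavesL (_ :: List.drop 1 [s]) = _
  simp only [List.drop_succ_cons, List.drop_nil, leavesL]
  rw [leavesT_graftList h2, leavesL_append]
  have : leavesL (x.take (x.length - (i+1))) + leavesL (x.drop (x.length - (i+1))) = leavesL x := by
    rw [← leavesL_append, List.take_append_drop]
  show _ + (_ + leavesL [s] + leavesL ([] : List PTree)) = _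
  simp only [leavesL]
  omega

lemma tg_strm_of_lt {x : List PTree} {s : PTree} {i : ℕ} (hi : i + 1 < x.length) :
    tg (strm x [s] 0 i) = 0 := by
  rw [strm]
  have hne : x.take (x.length - (i+1)) ≠ [] := by
    have : (x.take (x.length - (i+1))).length = x.length - (i+1) := by
      rw [List.length_take]; omega
    intro h; rw [h] at this; simp at this; omega
  match h : x.take (x.length - (i+1)) with
  | [] => exact absurd h hne
  | a :: r => rw [List.cons_append]; rcases r with _ | ⟨b, r'⟩ <;> simp [tg]

lemma initL_cons_ne_nil (a b : PTree) (cs : List PTree) : initL a (b :: cs) ≠ [] := by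
  simp [initL]

variable (K)

noncomputable def D : List PTree → H K ⊗[K] H K
  | [] => 0
  | [PTree.leaf] => 0
  | [PTree.graft a b cs] =>
      LinearMap.lTensor (H K)
        ((succH K).flip (Finsupp.single ⟨[lastT a (b :: cs)], by simp⟩ 1))
        (D (initL a (b :: cs)))
      + LinearMap.rTensor (H K)
          (succH K (Finsupp.single ⟨initL a (b :: cs), initL_cons_ne_nil a b cs⟩ 1))
          (D [lastT a (b :: cs)])
      + Finsupp.single ⟨initL a (b :: cs), initL_cons_ne_nil a b cs⟩ (1:K)
          ⊗ₜ[K] Finsupp.single ⟨[lastT a (b :: cs)], by simp⟩ (1:K)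
      - ∑ i ∈ (Finset.range ((initL a (b :: cs)).length - 1)).attach,
          D (strm (initL a (b :: cs)) [lastT a (b :: cs)] 0 i.1)
  | t :: r :: rest =>
      LinearMap.lTensor (H K) ((mulH K).flip (Finsupp.single ⟨r :: rest, by simp⟩ 1)) (D [t])
      + LinearMap.rTensor (H K) (mulH K (Finsupp.single ⟨[t], by simp⟩ 1)) (D (r :: rest))
      + Finsupp.single ⟨[t], by simp⟩ (1:K) ⊗ₜ[K] Finsupp.single ⟨r :: rest, by simp⟩ (1:K)
  termination_by l => mu l
  decreasing_by
  · have h1 := leavesL_initL_lastT a (b :: cs)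
    have h2 := leavesT_pos (lastT a (b :: cs))
    have h3 := tg_le (initL a (b :: cs))
    simp only [mu, tg, tgT, leavesL, leavesT] at *
    omega
  · have h1 := leavesL_initL_lastT a (b :: cs)
    have h2 := leavesL_pos (initL_cons_ne_nil a b cs)
    have h3 := tg_le [lastT a (b :: cs)]
    simp only [mu, tg, tgT, leavesL, leavesT] at *
    omega
  · have hi := i.2
    simp only [Finset.mem_range] at hi
    have hxlen : (initL a (b::cs)).length = cs.length + 1 := by
      rw [length_initL]; rfl
    have h1 := leavesL_strm (x := initL a (b::cs)) (s := lastT a (b::cs)) (i := i.1)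
      (by omega)
    have h2 := tg_strm_of_lt (x := initL a (b::cs)) (s := lastT a (b::cs)) (i := i.1)
      (by omega)
    have h3 := leavesL_initL_lastT a (b :: cs)
    simp only [mu, tg, tgT, leavesL, leavesT] at *
    omega
  · have h1 := leavesL_pos (l := r :: rest) (by simp)
    have h2 := tg_le [t]
    simp only [mu, tg, leavesL] at *
    omega
  · have h1 := leavesT_pos t
    have h2 := tg_le (r :: rest)
    simp only [mu, tg, leavesL] at *
    omega

end Stmt4
namespace Stmt4

variable {K : Type*} [Field K]
variable (K)

/-- The coproduct. -/
noncomputable def Delta : H K →ₗ[K] H K ⊗[K] H K :=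
  Finsupp.lift (H K ⊗[K] H K) K Forest fun w => D K w.1

lemma Delta_single (w : Forest) : Delta K (Finsupp.single w 1) = D K w.1 :=
  lift_single _ w

lemma D_cons (t r : PTree) (rest : List PTree) :
    D K (t :: r :: rest) =
      LinearMap.lTensor (H K) ((mulH K).flip (Finsupp.single ⟨r :: rest, by simp⟩ 1)) (D K [t])
      + LinearMap.rTensor (H K) (mulH K (Finsupp.single ⟨[t], by simp⟩ 1)) (D K (r :: rest))
      + Finsupp.single ⟨[t], by simp⟩ (1:K) ⊗ₜ[K] Finsupp.single ⟨r :: rest, by simp⟩ (1:K) := by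
  rw [D]

lemma D_graft (a b : PTree) (cs : List PTree) :
    D K [PTree.graft a b cs] =
      LinearMap.lTensor (H K)
        ((succH K).flip (Finsupp.single ⟨[lastT a (b :: cs)], by simp⟩ 1))
        (D K (initL a (b :: cs)))
      + LinearMap.rTensor (H K)
          (succH K (Finsupp.single ⟨initL a (b :: cs), initL_cons_ne_nil a b cs⟩ 1))
          (D K [lastT a (b :: cs)])
      + Finsupp.single ⟨initL a (b :: cs), initL_cons_ne_nil a b cs⟩ (1:K)
          ⊗ₜ[K] Finsupp.single ⟨[lastT a (b :: cs)], by simp⟩ (1:K)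
      - ∑ i ∈ (Finset.range ((initL a (b :: cs)).length - 1)).attach,
          D K (strm (initL a (b :: cs)) [lastT a (b :: cs)] 0 i.1) := by
  rw [D]

end Stmt4
namespace Stmt4

variable {K : Type*} [Field K]

lemma hext {M : Type*} [AddCommMonoid M] [Module K M] {f g : H K →ₗ[K] M}
    (h : ∀ w : Forest, f (Finsupp.single w 1) = g (Finsupp.single w 1)) : f = g := by
  refine Finsupp.lhom_ext fun a b => ?_
  have hb : (Finsupp.single a b : H K) = b • Finsupp.single a 1 := by
    rw [Finsupp.smul_single, smul_eq_mul, mul_one]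
  rw [hb, map_smul, map_smul, h]

-- tensor gymnastics
lemma lT_lT (f g : H K →ₗ[K] H K) (t : H K ⊗[K] H K) :
    LinearMap.lTensor (H K) f (LinearMap.lTensor (H K) g t)
      = LinearMap.lTensor (H K) (f ∘ₗ g) t := by
  rw [LinearMap.lTensor_comp, LinearMap.comp_apply]

lemma rT_rT (f g : H K →ₗ[K] H K) (t : H K ⊗[K] H K) :
    LinearMap.rTensor (H K) f (LinearMap.rTensor (H K) g t)
      = LinearMap.rTensor (H K) (f ∘ₗ g) t := by
  rw [LinearMap.rTensor_comp, LinearMap.comp_apply]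

lemma lT_rT (f g : H K →ₗ[K] H K) (t : H K ⊗[K] H K) :
    LinearMap.lTensor (H K) f (LinearMap.rTensor (H K) g t)
      = LinearMap.rTensor (H K) g (LinearMap.lTensor (H K) f t) := by
  rw [← LinearMap.comp_apply, ← LinearMap.comp_apply,
    LinearMap.lTensor_comp_rTensor, LinearMap.rTensor_comp_lTensor]

-- operator identities for mulH
lemma mulH_single' (xl yl : List PTree) (hx : xl ≠ []) (hy : yl ≠ [])
    (hxy : xl ++ yl ≠ []) :
    mulH K (Finsupp.single ⟨xl, hx⟩ 1) (Finsupp.single ⟨yl, hy⟩ 1)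
      = Finsupp.single ⟨xl ++ yl, hxy⟩ (1:K) :=
  mulH_single ⟨xl, hx⟩ ⟨yl, hy⟩

lemma RmRm (xl yl : List PTree) (hx : xl ≠ []) (hy : yl ≠ []) (hxy : xl ++ yl ≠ []) :
    ((mulH K).flip (Finsupp.single ⟨yl, hy⟩ 1)).comp ((mulH K).flip (Finsupp.single ⟨xl, hx⟩ 1))
      = (mulH K).flip (Finsupp.single ⟨xl ++ yl, hxy⟩ 1) := by
  apply hext; intro w
  simp only [LinearMap.comp_apply, LinearMap.flip_apply]
  rw [mulH_single, mulH_single, mulH_single]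
  have : fcat (fcat w ⟨xl, hx⟩) ⟨yl, hy⟩ = fcat w ⟨xl ++ yl, hxy⟩ :=
    Subtype.ext (by simp [fcat])
  rw [this]

lemma LmLm (xl yl : List PTree) (hx : xl ≠ []) (hy : yl ≠ []) (hxy : xl ++ yl ≠ []) :
    (mulH K (Finsupp.single ⟨xl, hx⟩ 1)).comp (mulH K (Finsupp.single ⟨yl, hy⟩ 1))
      = mulH K (Finsupp.single ⟨xl ++ yl, hxy⟩ 1) := by
  apply hext; intro w
  simp only [LinearMap.comp_apply]
  rw [mulH_single, mulH_single, mulH_single]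
  have : fcat ⟨xl, hx⟩ (fcat ⟨yl, hy⟩ w) = fcat ⟨xl ++ yl, hxy⟩ w :=
    Subtype.ext (by simp [fcat])
  rw [this]

/-- The `*` relation on basis elements, in list form. -/
lemma Dmul (xl : List PTree) (hx : xl ≠ []) (yl : List PTree) (hy : yl ≠ []) :
    D K (xl ++ yl) =
      LinearMap.lTensor (H K) ((mulH K).flip (Finsupp.single ⟨yl, hy⟩ 1)) (D K xl)
      + LinearMap.rTensor (H K) (mulH K (Finsupp.single ⟨xl, hx⟩ 1)) (D K yl)
      + Finsupp.single ⟨xl, hx⟩ (1:K) ⊗ₜ[K] Finsupp.single ⟨yl, hy⟩ (1:K) := by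
  induction xl with
  | nil => exact absurd rfl hx
  | cons t xs ih =>
    match xs, yl, hy with
    | [], r :: rest, _ => exact D_cons K t r rest
    | a :: xs', yl, hy =>
      have hys : (a :: xs') ++ yl ≠ [] := by simp
      have step := D_cons K t a (xs' ++ yl)
      rw [List.cons_append, List.cons_append]
      have ih' := ih (by simp)
      rw [List.cons_append] at ih'
      rw [step, ih']
      -- now massage
      rw [D_cons K t a xs']
      simp only [map_add, LinearMap.lTensor_tmul, LinearMap.rTensor_tmul]
      rw [lT_rT, rT_rT, lT_lT,
        LmLm (K := K) [t] (a :: xs') (by simp) (by simp) (by simp),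
        RmRm (K := K) (a :: xs') yl (by simp) hy hys]
      simp only [LinearMap.flip_apply]
      rw [mulH_single' (K := K) [t] (a :: xs') (by simp) (by simp) (by simp),
        mulH_single' (K := K) (a :: xs') yl (by simp) hy hys]
      simp only [List.cons_append, List.singleton_append, List.nil_append]
      abel

end Stmt4
namespace Stmt4

variable {K : Type*} [Field K]

def strm2 (x y z : List PTree) (m i : ℕ) : List PTree :=
  x.take (x.length - (i+1)) ++
    graftList ((x.drop (x.length - (i+1)) ++ y) ++ z.take (m+1)) :: z.drop (m+1)

lemma strm2_ne_nil (x y z : List PTree) (m i : ℕ) : strm2 x y z m i ≠ [] := by simp [strm2]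

lemma single_eq_of_list {l l' : List PTree} (h : l = l') (h1 : l ≠ []) (h2 : l' ≠ []) :
    (Finsupp.single ⟨l, h1⟩ 1 : H K) = Finsupp.single ⟨l', h2⟩ 1 := by subst h; rfl

lemma strmL1 (x y z : List PTree) {k : ℕ} (i : ℕ) (hk : k + 1 ≤ y.length) :
    strm x (y ++ z) k i = strm x y k i ++ z := by
  rw [strm, strm, List.take_append_of_le_length hk, List.drop_append_of_le_length hk]
  simp [List.append_assoc]

lemma strmL2 (x y z : List PTree) (m i : ℕ) :
    strm x (y ++ z) (y.length + m) i = strm2 x y z m i := by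
  have h : y.length + m + 1 = y.length + (m + 1) := by omega
  rw [strm, strm2, h, List.take_append, List.drop_append]
  simp [List.append_assoc, List.take_of_length_le]

lemma strmL3 (x y z : List PTree) {i : ℕ} (m : ℕ) (hi : i < x.length) :
    strm (x ++ y) z m (y.length + i) = strm2 x y z m i := by
  have hn : (x ++ y).length - (y.length + i + 1) = x.length - (i+1) := by
    simp [List.length_append]; omega
  rw [strm, strm2, hn, List.take_append_of_le_length (by omega),
    List.drop_append_of_le_length (by omega)]

lemma strmL4 (x y z : List PTree) {j : ℕ} (m : ℕ) (hj : j + 1 ≤ y.length) :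
    strm (x ++ y) z m j = x ++ strm y z m j := by
  have hn : (x ++ y).length - (j+1) = x.length + (y.length - (j+1)) := by
    simp [List.length_append]; omega
  rw [strm, strm, hn, List.take_append, List.drop_append]
  simp [List.append_assoc, List.take_of_length_le, List.drop_of_length_le]

/-- The key identity `x ≻ (y*z) + x*(y≻z) = (x≻y)*z + (x*y)≻z`. -/
lemma succ_split (x y z : Forest) :
    succForest K x (fcat y z) + mulH K (Finsupp.single x 1) (succForest K y z)
      = mulH K (succForest K x y) (Finsupp.single z 1) + succForest K (fcat x y) z := by
  have e1 : succForest K x (fcat y z)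
      = (∑ k ∈ Finset.range y.1.length, ∑ i ∈ Finset.range x.1.length,
          Finsupp.single ⟨strm x.1 y.1 k i ++ z.1, by simp [strm]⟩ (1:K))
        + ∑ m ∈ Finset.range z.1.length, ∑ i ∈ Finset.range x.1.length,
          Finsupp.single ⟨strm2 x.1 y.1 z.1 m i, strm2_ne_nil _ _ _ _ _⟩ (1:K) := by
    rw [succForest_eq]
    show ∑ k ∈ Finset.range (y.1 ++ z.1).length, _ = _
    rw [List.length_append, Finset.sum_range_add]
    congr 1
    · refine Finset.sum_congr rfl fun k hk => Finset.sum_congr rfl fun i _ => ?_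
      exact single_eq_of_list (strmL1 x.1 y.1 z.1 i (Finset.mem_range.mp hk)) _ _
    · refine Finset.sum_congr rfl fun m _ => Finset.sum_congr rfl fun i _ => ?_
      exact single_eq_of_list (strmL2 x.1 y.1 z.1 m i) _ _
  have e2 : mulH K (Finsupp.single x 1) (succForest K y z)
      = ∑ m ∈ Finset.range z.1.length, ∑ k ∈ Finset.range y.1.length,
          Finsupp.single ⟨x.1 ++ strm y.1 z.1 m k, by simp [x.2]⟩ (1:K) := by
    rw [succForest_eq, map_sum]
    refine Finset.sum_congr rfl fun m _ => ?_
    rw [map_sum]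
    refine Finset.sum_congr rfl fun k _ => ?_
    exact mulH_single x _
  have e3 : mulH K (succForest K x y) (Finsupp.single z 1)
      = ∑ k ∈ Finset.range y.1.length, ∑ i ∈ Finset.range x.1.length,
          Finsupp.single ⟨strm x.1 y.1 k i ++ z.1, by simp [strm]⟩ (1:K) := by
    rw [succForest_eq, map_sum, LinearMap.sum_apply]
    refine Finset.sum_congr rfl fun k _ => ?_
    rw [map_sum, LinearMap.sum_apply]
    refine Finset.sum_congr rfl fun i _ => ?_
    exact mulH_single _ z
  have e4 : succForest K (fcat x y) z
      = (∑ m ∈ Finset.range z.1.length, ∑ k ∈ Finset.range y.1.length,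
          Finsupp.single ⟨x.1 ++ strm y.1 z.1 m k, by simp [x.2]⟩ (1:K))
        + ∑ m ∈ Finset.range z.1.length, ∑ i ∈ Finset.range x.1.length,
          Finsupp.single ⟨strm2 x.1 y.1 z.1 m i, strm2_ne_nil _ _ _ _ _⟩ (1:K) := by
    rw [succForest_eq, ← Finset.sum_add_distrib]
    refine Finset.sum_congr rfl fun m _ => ?_
    show ∑ j ∈ Finset.range (x.1 ++ y.1).length, _ = _
    rw [List.length_append, add_comm x.1.length y.1.length, Finset.sum_range_add]
    congr 1
    · refine Finset.sum_congr rfl fun j hj => ?_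
      exact single_eq_of_list (strmL4 x.1 y.1 z.1 m (Finset.mem_range.mp hj)) _ _
    · refine Finset.sum_congr rfl fun i hi => ?_
      exact single_eq_of_list (strmL3 x.1 y.1 z.1 m (Finset.mem_range.mp hi)) _ _
  rw [e1, e2, e3, e4]
  abel

end Stmt4
namespace Stmt4

variable {K : Type*} [Field K]

/-- The nonunital-infinitesimal relation for a bilinear operation `B`. -/
def NIrel (B : H K →ₗ[K] H K →ₗ[K] H K) (Dl : H K →ₗ[K] H K ⊗[K] H K) (X Y : H K) : Prop :=
  Dl (B X Y) = LinearMap.lTensor (H K) (B.flip Y) (Dl X)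
    + LinearMap.rTensor (H K) (B X) (Dl Y) + X ⊗ₜ[K] Y

lemma NIrel_ext {B : H K →ₗ[K] H K →ₗ[K] H K} {Dl : H K →ₗ[K] H K ⊗[K] H K}
    (h : ∀ x y : Forest, NIrel B Dl (Finsupp.single x 1) (Finsupp.single y 1)) :
    ∀ X Y, NIrel B Dl X Y := by
  have hsmul : ∀ (X Y : H K) (b c : K), NIrel B Dl X Y → NIrel B Dl (b • X) (c • Y) := by
    intro X Y b c hXY
    unfold NIrel at *
    simp only [map_smul, LinearMap.smul_apply, LinearMap.lTensor_smul, LinearMap.rTensor_smul,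
      TensorProduct.smul_tmul', TensorProduct.tmul_smul, hXY]
    simp only [smul_add, TensorProduct.smul_tmul']
    rw [smul_comm b c]
  intro X Y
  induction X using Finsupp.induction_linear generalizing Y with
  | zero =>
    unfold NIrel
    simp
  | add f g hf hg =>
    unfold NIrel at *
    simp only [map_add, LinearMap.add_apply, LinearMap.rTensor_add, TensorProduct.add_tmul]
    rw [hf, hg]
    abel
  | single a b =>
    induction Y using Finsupp.induction_linear with
    | zero =>
      unfold NIrel
      simp
    | add f g hf hg =>
      unfold NIrel at *
      simp only [map_add, LinearMap.add_apply, LinearMap.lTensor_add, TensorProduct.tmul_add]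
      rw [hf, hg]
      abel
    | single y c =>
      have h1 : (Finsupp.single a b : H K) = b • Finsupp.single a 1 := by
        rw [Finsupp.smul_single, smul_eq_mul, mul_one]
      have h2 : (Finsupp.single y c : H K) = c • Finsupp.single y 1 := by
        rw [Finsupp.smul_single, smul_eq_mul, mul_one]
      rw [h1, h2]
      exact hsmul _ _ _ _ (h a y)

/-- The `*` relation holds. -/
lemma NImul : ∀ X Y, NIrel (mulH K) (Delta K) X Y := by
  apply NIrel_ext
  intro x y
  unfold NIrel
  rw [mulH_single, Delta_single, Delta_single, Delta_single]
  exact Dmul x.1 x.2 y.1 y.2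

end Stmt4
namespace Stmt4

variable {K : Type*} [Field K]

lemma initL_append_single (a b : PTree) (cs : List PTree) (s : PTree) :
    initL a (b :: (cs ++ [s])) = a :: b :: cs := by
  induction cs generalizing a b with
  | nil => simp [initL]
  | cons c cs' ih => rw [List.cons_append, initL, ih]

lemma lastT_append_single (a b : PTree) (cs : List PTree) (s : PTree) :
    lastT a (b :: (cs ++ [s])) = s := by
  induction cs generalizing a b with
  | nil => simp [lastT]
  | cons c cs' ih => rw [List.cons_append, lastT, ih]

lemma strm_top (xl : List PTree) (hx : xl ≠ []) (s : PTree) :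
    strm xl [s] 0 (xl.length - 1) = [graftList (xl ++ [s])] := by
  have h0 : xl.length - (xl.length - 1 + 1) = 0 := by
    have := List.length_pos_iff.mpr hx; omega
  rw [strm, h0]
  simp

lemma D_top (a : PTree) (tl : List PTree) (s : PTree) :
    D K [graftList ((a :: tl) ++ [s])] =
      LinearMap.lTensor (H K) ((succH K).flip (Finsupp.single ⟨[s], by simp⟩ 1)) (D K (a :: tl))
      + LinearMap.rTensor (H K) (succH K (Finsupp.single ⟨a :: tl, by simp⟩ 1)) (D K [s])
      + Finsupp.single ⟨a :: tl, by simp⟩ (1:K) ⊗ₜ[K] Finsupp.single ⟨[s], by simp⟩ (1:K)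
      - ∑ i ∈ Finset.range ((a :: tl).length - 1), D K (strm (a :: tl) [s] 0 i) := by
  cases tl with
  | nil =>
    show D K [PTree.graft a s []] = _
    rw [D_graft K a s []]
    simp [initL, lastT]
  | cons b cs =>
    show D K [PTree.graft a b (cs ++ [s])] = _
    rw [D_graft K a b (cs ++ [s])]
    rw [Finset.sum_attach (Finset.range ((initL a (b :: (cs ++ [s]))).length - 1))
        (fun i => D K (strm (initL a (b :: (cs ++ [s]))) [lastT a (b :: (cs ++ [s]))] 0 i))]
    simp only [initL_append_single, lastT_append_single]

/-- The `≻` relation when the right factor is a single tree. -/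
lemma NIsucc_base (x : Forest) (s : PTree) :
    NIrel (succH K) (Delta K) (Finsupp.single x 1) (Finsupp.single ⟨[s], by simp⟩ 1) := by
  obtain ⟨xl, hxl⟩ := x
  cases xl with
  | nil => exact absurd rfl hxl
  | cons a tl =>
    unfold NIrel
    rw [succH_single, succForest_eq]
    show Delta K (∑ k ∈ Finset.range 1, _) = _
    rw [Finset.range_one, Finset.sum_singleton, map_sum]
    simp only [Delta_single]
    show (∑ i ∈ Finset.range (a :: tl).length, D K (strm (a :: tl) [s] 0 i)) = _
    have hlen : (a :: tl).length = ((a :: tl).length - 1) + 1 := by simp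
    rw [hlen, Finset.sum_range_succ]
    rw [strm_top (a :: tl) (by simp) s, D_top]
    abel

end Stmt4
namespace Stmt4

variable {K : Type*} [Field K]

lemma NIrel.eq {B : H K →ₗ[K] H K →ₗ[K] H K} {Dl : H K →ₗ[K] H K ⊗[K] H K} {X Y : H K}
    (h : NIrel B Dl X Y) :
    Dl (B X Y) = LinearMap.lTensor (H K) (B.flip Y) (Dl X)
      + LinearMap.rTensor (H K) (B X) (Dl Y) + X ⊗ₜ[K] Y := h

lemma NIsucc_basis : ∀ (n : ℕ) (y : Forest), y.1.length ≤ n →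
    ∀ x : Forest, NIrel (succH K) (Delta K) (Finsupp.single x 1) (Finsupp.single y 1) := by
  intro n
  induction n with
  | zero =>
    rintro ⟨yl, hyl⟩ hlen x
    exact absurd (Nat.le_zero.mp hlen) (List.length_pos_iff.mpr hyl).ne'
  | succ n ih =>
    rintro ⟨yl, hyl⟩ hlen x
    match yl, hyl, hlen with
    | [u], _, _ => exact NIsucc_base x u
    | u :: v0 :: v', hyl, hlen =>
      -- notation
      set yu : Forest := ⟨[u], List.cons_ne_nil u []⟩ with hyu
      set yv : Forest := ⟨v0 :: v', List.cons_ne_nil v0 v'⟩ with hyv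
      have hvlen : yv.1.length ≤ n := by simpa [hyv] using hlen
      have hfc : (⟨u :: v0 :: v', hyl⟩ : Forest) = fcat yu yv := Subtype.ext (by simp [fcat, hyu, hyv])
      -- the interior relations
      have hb := (NIsucc_base (K := K) x u).eq
      rw [show (⟨[u], by simp⟩ : Forest) = yu from rfl] at hb
      have hIH1 := ((ih yv hvlen (fcat x yu))).eq
      have hIH2 := ((ih yv hvlen yu)).eq
      have hm1 := (NImul (K := K) (succForest K x yu) (Finsupp.single yv 1)).eq
      have hm2 := (NImul (K := K) (Finsupp.single x 1) (Finsupp.single yu 1)).eq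
      have hm3 := (NImul (K := K) (Finsupp.single x 1) (succForest K yu yv)).eq
      have hm4 := (NImul (K := K) (Finsupp.single yu 1) (Finsupp.single yv 1)).eq
      -- the splitting of x ≻ y
      have split : succForest K x (fcat yu yv)
          = mulH K (succForest K x yu) (Finsupp.single yv 1)
            + succForest K (fcat x yu) yv
            - mulH K (Finsupp.single x 1) (succForest K yu yv) := by
        rw [eq_sub_iff_add_eq, ← succ_split]
      -- operator identity, right form
      have opR : ((mulH K).flip (Finsupp.single yv 1)) ∘ₗ ((succH K).flip (Finsupp.single yu 1))
            + ((succH K).flip (Finsupp.single yv 1)) ∘ₗ ((mulH K).flip (Finsupp.single yu 1))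
          = (succH K).flip (Finsupp.single (fcat yu yv) 1)
            + (mulH K).flip (succForest K yu yv) := by
        apply hext; intro w
        simp only [LinearMap.add_apply, LinearMap.comp_apply, LinearMap.flip_apply]
        rw [succH_single, mulH_single, succH_single, succH_single]
        exact (succ_split w yu yv).symm
      -- operator identity, left form
      have opL : succH K (Finsupp.single (fcat x yu) 1) + mulH K (succForest K x yu)
          = (mulH K (Finsupp.single x 1)) ∘ₗ (succH K (Finsupp.single yu 1))
            + (succH K (Finsupp.single x 1)) ∘ₗ (mulH K (Finsupp.single yu 1)) := by
        apply hext; intro w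
        simp only [LinearMap.add_apply, LinearMap.comp_apply]
        rw [succH_single, mulH_single, succH_single, succH_single]
        exact (add_comm _ _).trans ((succ_split (K := K) x yu w).symm.trans (add_comm _ _))
      -- now assemble
      unfold NIrel
      rw [hfc, succH_single x (fcat yu yv), split]
      rw [map_sub, map_add, hm1, hm3]
      have hsf : succForest K (fcat x yu) yv
          = succH K (Finsupp.single (fcat x yu) 1) (Finsupp.single yv 1) :=
        (succH_single _ _).symm
      rw [hsf, hIH1]
      have hsx : (Finsupp.single (fcat x yu) 1 : H K)
          = mulH K (Finsupp.single x 1) (Finsupp.single yu 1) := (mulH_single x yu).symm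
      rw [hsx, hm2]
      have hSxu : succForest K x yu
          = succH K (Finsupp.single x 1) (Finsupp.single yu 1) := (succH_single _ _).symm
      have hSuv : succForest K yu yv
          = succH K (Finsupp.single yu 1) (Finsupp.single yv 1) := (succH_single _ _).symm
      rw [hSxu, hb, hSuv, hIH2]
      have hsy : (Finsupp.single (fcat yu yv) 1 : H K)
          = mulH K (Finsupp.single yu 1) (Finsupp.single yv 1) := (mulH_single yu yv).symm
      rw [hsy, hm4]
      -- distribute
      simp only [map_add, map_sub, LinearMap.add_apply, LinearMap.sub_apply,
        LinearMap.lTensor_tmul, LinearMap.rTensor_tmul, LinearMap.flip_apply,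
        LinearMap.lTensor_add, LinearMap.rTensor_add, LinearMap.lTensor_sub,
        LinearMap.rTensor_sub]
      -- combine the P-terms using opR
      have hP : LinearMap.lTensor (H K) ((succH K).flip (mulH K (Finsupp.single yu 1)
            (Finsupp.single yv 1))) (Delta K (Finsupp.single x 1))
          = LinearMap.lTensor (H K) (((mulH K).flip (Finsupp.single yv 1))
              ∘ₗ ((succH K).flip (Finsupp.single yu 1))) (Delta K (Finsupp.single x 1))
            + LinearMap.lTensor (H K) (((succH K).flip (Finsupp.single yv 1))
              ∘ₗ ((mulH K).flip (Finsupp.single yu 1))) (Delta K (Finsupp.single x 1))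
            - LinearMap.lTensor (H K) ((mulH K).flip (succH K (Finsupp.single yu 1)
              (Finsupp.single yv 1))) (Delta K (Finsupp.single x 1)) := by
        have hPmap : (succH K).flip (mulH K (Finsupp.single yu 1) (Finsupp.single yv 1))
            = (((mulH K).flip (Finsupp.single yv 1)) ∘ₗ ((succH K).flip (Finsupp.single yu 1))
              + ((succH K).flip (Finsupp.single yv 1)) ∘ₗ ((mulH K).flip (Finsupp.single yu 1)))
              - (mulH K).flip (succH K (Finsupp.single yu 1) (Finsupp.single yv 1)) := by
          rw [← hsy, ← hSuv, opR]
          abel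
        rw [hPmap, LinearMap.lTensor_sub, LinearMap.lTensor_add]
        rfl
      have hR : LinearMap.rTensor (H K) ((succH K) (mulH K (Finsupp.single x 1)
            (Finsupp.single yu 1))) (Delta K (Finsupp.single yv 1))
          = LinearMap.rTensor (H K) ((mulH K (Finsupp.single x 1))
              ∘ₗ (succH K (Finsupp.single yu 1))) (Delta K (Finsupp.single yv 1))
            + LinearMap.rTensor (H K) ((succH K (Finsupp.single x 1))
              ∘ₗ (mulH K (Finsupp.single yu 1))) (Delta K (Finsupp.single yv 1))
            - LinearMap.rTensor (H K) (mulH K (succH K (Finsupp.single x 1)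
              (Finsupp.single yu 1))) (Delta K (Finsupp.single yv 1)) := by
        have hRmap : succH K (mulH K (Finsupp.single x 1) (Finsupp.single yu 1))
            = ((mulH K (Finsupp.single x 1)) ∘ₗ (succH K (Finsupp.single yu 1))
              + (succH K (Finsupp.single x 1)) ∘ₗ (mulH K (Finsupp.single yu 1)))
              - mulH K (succH K (Finsupp.single x 1) (Finsupp.single yu 1)) := by
          rw [← hsx, ← hSxu, ← opL]
          abel
        rw [hRmap, LinearMap.rTensor_sub, LinearMap.rTensor_add]
        rfl
      rw [hP, hR]
      simp only [← lT_lT, ← rT_rT, LinearMap.comp_apply]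
      rw [lT_rT ((mulH K).flip (Finsupp.single yv 1)) (succH K (Finsupp.single x 1))]
      rw [lT_rT ((succH K).flip (Finsupp.single yv 1)) (mulH K (Finsupp.single x 1))]
      abel

/-- The `≻` relation holds. -/
lemma NIsucc : ∀ X Y, NIrel (succH K) (Delta K) X Y := by
  apply NIrel_ext
  intro x y
  exact NIsucc_basis y.1.length y le_rfl x

end Stmt4
namespace Stmt4

variable {K : Type*} [Field K]

lemma mu_initL_lt (a b : PTree) (cs : List PTree) :
    mu (initL a (b :: cs)) < mu [PTree.graft a b cs] := by
  have h1 := leavesL_initL_lastT a (b :: cs)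
  have h2 := leavesT_pos (lastT a (b :: cs))
  have h3 := tg_le (initL a (b :: cs))
  simp only [mu, tg, tgT, leavesL, leavesT] at *
  omega

lemma mu_last_lt (a b : PTree) (cs : List PTree) :
    mu [lastT a (b :: cs)] < mu [PTree.graft a b cs] := by
  have h1 := leavesL_initL_lastT a (b :: cs)
  have h2 := leavesL_pos (initL_cons_ne_nil a b cs)
  have h3 := tg_le [lastT a (b :: cs)]
  simp only [mu, tg, tgT, leavesL, leavesT] at *
  omega

lemma mu_strm_lt (a b : PTree) (cs : List PTree) {i : ℕ}
    (hi : i < (initL a (b :: cs)).length - 1) :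
    mu (strm (initL a (b :: cs)) [lastT a (b :: cs)] 0 i) < mu [PTree.graft a b cs] := by
  have hxlen : (initL a (b :: cs)).length = cs.length + 1 := by rw [length_initL]; rfl
  have h1 := leavesL_strm (x := initL a (b :: cs)) (s := lastT a (b :: cs)) (i := i) (by omega)
  have h2 := tg_strm_of_lt (x := initL a (b :: cs)) (s := lastT a (b :: cs)) (i := i) (by omega)
  have h3 := leavesL_initL_lastT a (b :: cs)
  simp only [mu, tg, tgT, leavesL, leavesT] at *
  omega

lemma mu_head_lt (t r : PTree) (rest : List PTree) : mu [t] < mu (t :: r :: rest) := by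
  have h1 := leavesL_pos (l := r :: rest) (by simp)
  have h2 := tg_le [t]
  simp only [mu, tg, leavesL] at *
  omega

lemma mu_tail_lt (t r : PTree) (rest : List PTree) : mu (r :: rest) < mu (t :: r :: rest) := by
  have h1 := leavesT_pos t
  have h2 := tg_le (r :: rest)
  simp only [mu, tg, leavesL] at *
  omega

lemma succForest_repr (a b : PTree) (cs : List PTree) :
    succForest K ⟨initL a (b :: cs), initL_cons_ne_nil a b cs⟩
        ⟨[lastT a (b :: cs)], by simp⟩
      = (∑ i ∈ Finset.range ((initL a (b :: cs)).length - 1),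
          Finsupp.single ⟨strm (initL a (b :: cs)) [lastT a (b :: cs)] 0 i,
            strm_ne_nil _ _ _ _⟩ (1:K))
        + Finsupp.single ⟨[PTree.graft a b cs], by simp⟩ (1:K) := by
  rw [succForest_eq]
  show ∑ k ∈ Finset.range 1, _ = _
  rw [Finset.range_one, Finset.sum_singleton]
  have hlen : (initL a (b :: cs)).length = ((initL a (b :: cs)).length - 1) + 1 := by
    rw [length_initL]; rfl
  rw [hlen, Finset.sum_range_succ]
  congr 1
  refine single_eq_of_list
    (l := strm (initL a (b :: cs)) [lastT a (b :: cs)] 0 ((initL a (b :: cs)).length - 1))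
    (l' := [PTree.graft a b cs]) ?_ _ _
  rw [strm_top _ (initL_cons_ne_nil a b cs) _, initL_append_lastT]
  rfl

/-- Uniqueness of the coproduct. -/
lemma Delta_unique (Dl : H K →ₗ[K] H K ⊗[K] H K)
    (h0 : Dl (Finsupp.single leafF 1) = 0)
    (hs : ∀ X Y, NIrel (succH K) Dl X Y)
    (hm : ∀ X Y, NIrel (mulH K) Dl X Y) : Dl = Delta K := by
  apply hext; intro w
  obtain ⟨l, hl⟩ := w
  suffices hkey : ∀ (n : ℕ) (l : List PTree) (hl : l ≠ []), mu l ≤ n →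
      Dl (Finsupp.single ⟨l, hl⟩ 1) = Delta K (Finsupp.single ⟨l, hl⟩ 1) from
    hkey (mu l) l hl le_rfl
  intro n
  induction n using Nat.strong_induction_on with
  | _ n ih =>
  intro l hl hmu
  have ihm : ∀ (l' : List PTree) (hl' : l' ≠ []), mu l' < mu l →
      Dl (Finsupp.single ⟨l', hl'⟩ 1) = Delta K (Finsupp.single ⟨l', hl'⟩ 1) :=
    fun l' hl' hlt => ih (mu l') (lt_of_lt_of_le hlt hmu) l' hl' le_rfl
  match l, hl with
  | [PTree.leaf], _ =>
    show Dl (Finsupp.single leafF 1) = Delta K (Finsupp.single leafF 1)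
    rw [h0, Delta_single]
    show (0 : H K ⊗[K] H K) = D K [PTree.leaf]
    rw [D]
  | t :: r :: rest, hl =>
    have h12 : mulH K (Finsupp.single ⟨[t], by simp⟩ 1) (Finsupp.single ⟨r :: rest, by simp⟩ 1)
        = Finsupp.single ⟨t :: r :: rest, hl⟩ (1:K) := by
      rw [mulH_single' (K := K) [t] (r :: rest) (by simp) (by simp) (by simp)]
      exact single_eq_of_list (by simp) _ _
    have e1 := ihm [t] (by simp) (mu_head_lt t r rest)
    have e2 := ihm (r :: rest) (by simp) (mu_tail_lt t r rest)
    rw [← h12, (hm _ _).eq, (NImul (K := K) _ _).eq, e1, e2]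
  | [PTree.graft a b cs], hl =>
    have hx' : (initL a (b :: cs) : List PTree) ≠ [] := initL_cons_ne_nil a b cs
    have hy' : ([lastT a (b :: cs)] : List PTree) ≠ [] := by simp
    have hrepr := succForest_repr (K := K) a b cs
    have hsng : succForest K ⟨initL a (b :: cs), hx'⟩ ⟨[lastT a (b :: cs)], hy'⟩
        = succH K (Finsupp.single ⟨initL a (b :: cs), hx'⟩ 1)
            (Finsupp.single ⟨[lastT a (b :: cs)], hy'⟩ 1) := (succH_single _ _).symm
    have ex' := ihm (initL a (b :: cs)) hx' (mu_initL_lt a b cs)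
    have ey' := ihm [lastT a (b :: cs)] hy' (mu_last_lt a b cs)
    have hDls : Dl (succH K (Finsupp.single ⟨initL a (b :: cs), hx'⟩ 1)
          (Finsupp.single ⟨[lastT a (b :: cs)], hy'⟩ 1))
        = Delta K (succH K (Finsupp.single ⟨initL a (b :: cs), hx'⟩ 1)
          (Finsupp.single ⟨[lastT a (b :: cs)], hy'⟩ 1)) := by
      rw [(hs _ _).eq, (NIsucc (K := K) _ _).eq, ex', ey']
    have hsum : ∑ i ∈ Finset.range ((initL a (b :: cs)).length - 1),
          Dl (Finsupp.single ⟨strm (initL a (b :: cs)) [lastT a (b :: cs)] 0 i,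
            strm_ne_nil _ _ _ _⟩ 1)
        = ∑ i ∈ Finset.range ((initL a (b :: cs)).length - 1),
          Delta K (Finsupp.single ⟨strm (initL a (b :: cs)) [lastT a (b :: cs)] 0 i,
            strm_ne_nil _ _ _ _⟩ 1) :=
      Finset.sum_congr rfl fun i hi =>
        ihm _ _ (mu_strm_lt a b cs (Finset.mem_range.mp hi))
    have hA : (∑ i ∈ Finset.range ((initL a (b :: cs)).length - 1),
          Dl (Finsupp.single ⟨strm (initL a (b :: cs)) [lastT a (b :: cs)] 0 i,
            strm_ne_nil _ _ _ _⟩ 1)) + Dl (Finsupp.single ⟨[PTree.graft a b cs], hl⟩ 1)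
        = Dl (succForest K ⟨initL a (b :: cs), hx'⟩ ⟨[lastT a (b :: cs)], hy'⟩) := by
      rw [hrepr, map_add, map_sum]
    have hB : (∑ i ∈ Finset.range ((initL a (b :: cs)).length - 1),
          Delta K (Finsupp.single ⟨strm (initL a (b :: cs)) [lastT a (b :: cs)] 0 i,
            strm_ne_nil _ _ _ _⟩ 1)) + Delta K (Finsupp.single ⟨[PTree.graft a b cs], hl⟩ 1)
        = Delta K (succForest K ⟨initL a (b :: cs), hx'⟩ ⟨[lastT a (b :: cs)], hy'⟩) := by
      rw [hrepr, map_add, map_sum]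
    rw [hsng, hDls, ← hsng, ← hB, hsum] at hA
    have hsub := sub_eq_zero.mpr hA
    have h3 : Dl (Finsupp.single ⟨[PTree.graft a b cs], hl⟩ 1)
        - Delta K (Finsupp.single ⟨[PTree.graft a b cs], hl⟩ 1) = 0 := by
      rw [← hsub]; abel
    exact sub_eq_zero.mp h3

end Stmt4
/-- There is a unique linear map `Δ : H → H ⊗ H` with `Δ(|) = 0`
satisfying the nonunital infinitesimal relations with respect to `≻` and `*`
(in Sweedler notation, `Δ(x ∘ y) = x₍₁₎ ⊗ (x₍₂₎ ∘ y) + (x ∘ y₍₁₎) ⊗ y₍₂₎ + x ⊗ y`). -/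
theorem stmt4 (K : Type*) [Field K] :
    ∃! Δ : H K →ₗ[K] H K ⊗[K] H K,
      Δ (Finsupp.single leafF 1) = 0 ∧
      (∀ x y : H K, Δ (succH K x y)
          = LinearMap.lTensor (H K) ((succH K).flip y) (Δ x)
            + LinearMap.rTensor (H K) (succH K x) (Δ y) + x ⊗ₜ[K] y) ∧
      (∀ x y : H K, Δ (mulH K x y)
          = LinearMap.lTensor (H K) ((mulH K).flip y) (Δ x)
            + LinearMap.rTensor (H K) (mulH K x) (Δ y) + x ⊗ₜ[K] y) := by
  refine ⟨Stmt4.Delta K, ⟨?_, ?_, ?_⟩, ?_⟩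
  · rw [Stmt4.Delta_single]
    show Stmt4.D K [PTree.leaf] = 0
    rw [Stmt4.D]
  · intro x y
    exact (Stmt4.NIsucc (K := K) x y).eq
  · intro x y
    exact (Stmt4.NImul (K := K) x y).eq
  · rintro Δ' ⟨h0, hsucc, hmul⟩
    exact Stmt4.Delta_unique Δ' h0 (fun X Y => hsucc X Y) (fun X Y => hmul X Y)
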